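/- Let k = 2 with group matrices A ∈ ℝ^{a×n} and B ∈ ℝ^{b×n}, and set C(μ) = μ AᵀA + (1−μ) BᵀB for μ ∈ [0,1], s_1 = λmax(AᵀA), s_2 = λmax(BᵀB). Assume that for every μ ∈ [0,1] the largest eigenvalue of C(μ) is simple. Then strong duality holds: min over unit vectors v ∈ ℝ^n of max(h_A(v), h_B(v)) equals max over μ ∈ [0,1] of g(μ) = μ s_1 + (1−μ) s_2 − λmax(C(μ)), and both optima are attained. -/

import Mathlib

open Matrix

/-- The largest eigenvalue of a real symmetric matrix, via its Rayleigh-quotient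
characterization: `λmax(M) = sup { vᵀ M v : ‖v‖ = 1 }`. -/
noncomputable def lamMax {n : ℕ} (M : Matrix (Fin n) (Fin n) ℝ) : ℝ :=
  sSup {r : ℝ | ∃ v : Fin n → ℝ, v ⬝ᵥ v = 1 ∧ r = v ⬝ᵥ (M *ᵥ v)}

/-- The rank-1 fair loss `h_M(v) = λmax(MᵀM) − vᵀ(MᵀM)v`. -/
noncomputable def fairLoss {m n : ℕ} (M : Matrix (Fin m) (Fin n) ℝ) (v : Fin n → ℝ) : ℝ :=
  lamMax (Mᵀ * M) - v ⬝ᵥ ((Mᵀ * M) *ᵥ v)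

/-- `C(μ) = μ AᵀA + (1−μ) BᵀB`. -/
noncomputable def Cmat {a b n : ℕ} (A : Matrix (Fin a) (Fin n) ℝ)
    (B : Matrix (Fin b) (Fin n) ℝ) (t : ℝ) : Matrix (Fin n) (Fin n) ℝ :=
  t • (Aᵀ * A) + (1 - t) • (Bᵀ * B)

/-- The two-group dual objective `g(μ) = μ s₁ + (1−μ) s₂ − λmax(C(μ))`. -/
noncomputable def gdual {a b n : ℕ} (A : Matrix (Fin a) (Fin n) ℝ)
    (B : Matrix (Fin b) (Fin n) ℝ) (t : ℝ) : ℝ :=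
  t * lamMax (Aᵀ * A) + (1 - t) * lamMax (Bᵀ * B) - lamMax (Cmat A B t)


lemma inner_eq_dot {n : ℕ} (x y : EuclideanSpace ℝ (Fin n)) :
    (inner ℝ x y : ℝ) = (x : Fin n → ℝ) ⬝ᵥ (y : Fin n → ℝ) := by
  simp [PiLp.inner_apply, dotProduct, RCLike.inner_apply, mul_comm]

lemma dot_symm {n : ℕ} (M : Matrix (Fin n) (Fin n) ℝ) (hM : M.IsHermitian)
    (u v : Fin n → ℝ) : u ⬝ᵥ (M *ᵥ v) = (M *ᵥ u) ⬝ᵥ v := by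
  have hMT : Mᵀ = M := by
    have := hM.eq; rwa [Matrix.conjTranspose_eq_transpose_of_trivial] at this
  rw [Matrix.dotProduct_mulVec, ← Matrix.mulVec_transpose, hMT]

lemma rayleigh_expand {n : ℕ} (M : Matrix (Fin n) (Fin n) ℝ) (hM : M.IsHermitian)
    (v : EuclideanSpace ℝ (Fin n)) :
    (v : Fin n → ℝ) ⬝ᵥ (M *ᵥ v) = ∑ i, hM.eigenvalues i * (inner ℝ (hM.eigenvectorBasis i) v : ℝ)^2 := by
  have hMv : ∀ y : EuclideanSpace ℝ (Fin n), True := fun _ => trivial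
  set Mv : EuclideanSpace ℝ (Fin n) := WithLp.toLp 2 (M *ᵥ (v : Fin n → ℝ) : Fin n → ℝ)
  have h0 : (v : Fin n → ℝ) ⬝ᵥ (M *ᵥ v) = (inner ℝ v Mv : ℝ) := (inner_eq_dot v Mv).symm
  rw [h0, ← (hM.eigenvectorBasis).sum_inner_mul_inner v Mv]
  congr 1; ext i
  have h2 : (inner ℝ (hM.eigenvectorBasis i) Mv : ℝ) = hM.eigenvalues i * (inner ℝ (hM.eigenvectorBasis i) v : ℝ) := by
    rw [inner_eq_dot, dot_symm M hM]; erw [hM.mulVec_eigenvectorBasis]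
    rw [inner_eq_dot]
    simp [smul_dotProduct]
  rw [h2, real_inner_comm v]
  ring

lemma sum_inner_sq {n : ℕ} (b : OrthonormalBasis (Fin n) ℝ (EuclideanSpace ℝ (Fin n)))
    (v : EuclideanSpace ℝ (Fin n)) :
    ∑ i, (inner ℝ (b i) v : ℝ)^2 = (inner ℝ v v : ℝ) := by
  rw [← b.sum_inner_mul_inner v v]
  congr 1; ext i; rw [real_inner_comm v (b i)]; ring


lemma lamMax_spec {n : ℕ} (hn : 0 < n) (M : Matrix (Fin n) (Fin n) ℝ) (hM : M.IsHermitian) :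
    (∀ v : Fin n → ℝ, v ⬝ᵥ v = 1 → v ⬝ᵥ (M *ᵥ v) ≤ lamMax M) ∧
    (∃ v : Fin n → ℝ, v ⬝ᵥ v = 1 ∧ M *ᵥ v = lamMax M • v) := by
  haveI : Nonempty (Fin n) := ⟨⟨0, hn⟩⟩
  obtain ⟨i0, -, hmax⟩ := Finset.exists_max_image Finset.univ hM.eigenvalues ⟨⟨0,hn⟩, Finset.mem_univ _⟩
  set lam := hM.eigenvalues i0 with hlam
  set b := hM.eigenvectorBasis with hb
  -- upper bound
  have hub : ∀ v : Fin n → ℝ, v ⬝ᵥ v = 1 → v ⬝ᵥ (M *ᵥ v) ≤ lam := by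
    intro v hv
    have hexp := rayleigh_expand M hM (WithLp.toLp 2 v)
    rw [hexp]
    have hpar : ∑ i, (inner ℝ (b i) (WithLp.toLp 2 v) : ℝ)^2 = 1 := by
      rw [sum_inner_sq b (WithLp.toLp 2 v), inner_eq_dot]; exact hv
    calc ∑ i, hM.eigenvalues i * (inner ℝ (b i) (WithLp.toLp 2 v) : ℝ)^2
        ≤ ∑ i, lam * (inner ℝ (b i) (WithLp.toLp 2 v) : ℝ)^2 := by
          apply Finset.sum_le_sum
          intro i _
          exact mul_le_mul_of_nonneg_right (hmax i (Finset.mem_univ i)) (sq_nonneg _)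
      _ = lam := by rw [← Finset.mul_sum, hpar, mul_one]
  -- the eigenvector
  have hw0unit : (b i0 : Fin n → ℝ) ⬝ᵥ (b i0 : Fin n → ℝ) = 1 := by
    rw [← inner_eq_dot]
    rw [real_inner_self_eq_norm_sq]
    rw [b.orthonormal.1 i0]; norm_num
  have hw0eig : M *ᵥ (b i0 : Fin n → ℝ) = lam • (b i0 : Fin n → ℝ) := hM.mulVec_eigenvectorBasis i0
  have hlamval : (b i0 : Fin n → ℝ) ⬝ᵥ (M *ᵥ (b i0 : Fin n → ℝ)) = lam := by
    rw [hw0eig, dotProduct_smul, hw0unit]; simp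
  have hmem : lam ∈ {r : ℝ | ∃ v : Fin n → ℝ, v ⬝ᵥ v = 1 ∧ r = v ⬝ᵥ (M *ᵥ v)} :=
    ⟨b i0, hw0unit, hlamval.symm⟩
  have hbdd : BddAbove {r : ℝ | ∃ v : Fin n → ℝ, v ⬝ᵥ v = 1 ∧ r = v ⬝ᵥ (M *ᵥ v)} := by
    refine ⟨lam, ?_⟩
    rintro r ⟨v, hv, rfl⟩
    exact hub v hv
  have hsup : lamMax M = lam := by
    apply le_antisymm
    · exact csSup_le ⟨lam, hmem⟩ (by rintro r ⟨v, hv, rfl⟩; exact hub v hv)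
    · exact le_csSup hbdd hmem
  refine ⟨?_, ⟨b i0, hw0unit, by rw [hsup]; exact hw0eig⟩⟩
  intro v hv
  rw [hsup]; exact hub v hv

lemma abs_rayleigh_le {n : ℕ} (M : Matrix (Fin n) (Fin n) ℝ) (v : Fin n → ℝ)
    (hv : v ⬝ᵥ v = 1) : |v ⬝ᵥ (M *ᵥ v)| ≤ ∑ i, ∑ j, |M i j| := by
  have hvi : ∀ i, |v i| ≤ 1 := by
    intro i
    rw [abs_le_one_iff_mul_self_le_one]
    calc v i * v i ≤ ∑ j, v j * v j := by
          apply Finset.single_le_sum (f := fun j => v j * v j) (fun j _ => mul_self_nonneg _)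
            (Finset.mem_univ i)
      _ = 1 := hv
  calc |v ⬝ᵥ (M *ᵥ v)| = |∑ i, v i * ∑ j, M i j * v j| := by rfl
    _ ≤ ∑ i, |v i * ∑ j, M i j * v j| := Finset.abs_sum_le_sum_abs _ _
    _ ≤ ∑ i, ∑ j, |M i j| := by
        apply Finset.sum_le_sum
        intro i _
        rw [abs_mul]
        calc |v i| * |∑ j, M i j * v j| ≤ 1 * ∑ j, |M i j * v j| := by
              apply mul_le_mul (hvi i) (Finset.abs_sum_le_sum_abs _ _) (abs_nonneg _) zero_le_one
          _ = ∑ j, |M i j * v j| := one_mul _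
          _ ≤ ∑ j, |M i j| := by
              apply Finset.sum_le_sum
              intro j _
              rw [abs_mul]
              calc |M i j| * |v j| ≤ |M i j| * 1 :=
                    mul_le_mul_of_nonneg_left (hvi j) (abs_nonneg _)
                _ = |M i j| := mul_one _

lemma Cmat_sub {a b n : ℕ} (A : Matrix (Fin a) (Fin n) ℝ) (B : Matrix (Fin b) (Fin n) ℝ)
    (s t : ℝ) : Cmat A B t = Cmat A B s + (t - s) • ((Aᵀ * A) - (Bᵀ * B)) := by
  ext i j
  simp [Cmat, Matrix.add_apply, Matrix.smul_apply, Matrix.sub_apply, smul_eq_mul]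
  ring

lemma symm_entries {m n : ℕ} (M : Matrix (Fin m) (Fin n) ℝ) (i j : Fin n) :
    (Mᵀ * M) i j = (Mᵀ * M) j i := by
  simp only [Matrix.mul_apply, Matrix.transpose_apply]
  exact Finset.sum_congr rfl (fun k _ => mul_comm _ _)

lemma Cmat_herm {a b n : ℕ} (A : Matrix (Fin a) (Fin n) ℝ) (B : Matrix (Fin b) (Fin n) ℝ)
    (r : ℝ) : (Cmat A B r).IsHermitian := by
  show (Cmat A B r)ᴴ = Cmat A B r
  ext i j
  simp only [Matrix.conjTranspose_apply, star_trivial, Cmat, Matrix.add_apply,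
    Matrix.smul_apply, smul_eq_mul]
  rw [symm_entries A i j, symm_entries B i j]

lemma lamMax_lipschitz {a b n : ℕ} (hn : 0 < n) (A : Matrix (Fin a) (Fin n) ℝ)
    (B : Matrix (Fin b) (Fin n) ℝ) (s t : ℝ) :
    lamMax (Cmat A B t) ≤ lamMax (Cmat A B s) + |t - s| * ∑ i, ∑ j, |((Aᵀ * A) - (Bᵀ * B)) i j| := by
  set K := ∑ i, ∑ j, |((Aᵀ * A) - (Bᵀ * B)) i j| with hK
  have hherm : ∀ r : ℝ, (Cmat A B r).IsHermitian := Cmat_herm A B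
  obtain ⟨hubs, -⟩ := lamMax_spec hn _ (hherm s)
  haveI : Nonempty (Fin n) := ⟨⟨0, hn⟩⟩
  apply csSup_le
  · obtain ⟨-, v, hv, hveig⟩ := lamMax_spec hn _ (hherm t)
    exact ⟨_, v, hv, rfl⟩
  rintro r ⟨v, hv, rfl⟩
  have hsplit : v ⬝ᵥ (Cmat A B t *ᵥ v) =
      v ⬝ᵥ (Cmat A B s *ᵥ v) + (t - s) * (v ⬝ᵥ (((Aᵀ * A) - (Bᵀ * B)) *ᵥ v)) := by
    rw [Cmat_sub A B s t, Matrix.add_mulVec, dotProduct_add, Matrix.smul_mulVec,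
      dotProduct_smul, smul_eq_mul]
  rw [hsplit]
  have h1 := hubs v hv
  have h2 : (t - s) * (v ⬝ᵥ (((Aᵀ * A) - (Bᵀ * B)) *ᵥ v)) ≤ |t - s| * K := by
    calc (t - s) * (v ⬝ᵥ (((Aᵀ * A) - (Bᵀ * B)) *ᵥ v)) ≤ |(t - s) * (v ⬝ᵥ (((Aᵀ * A) - (Bᵀ * B)) *ᵥ v))| := le_abs_self _
      _ = |t - s| * |v ⬝ᵥ (((Aᵀ * A) - (Bᵀ * B)) *ᵥ v)| := abs_mul _ _
      _ ≤ |t - s| * K := mul_le_mul_of_nonneg_left (abs_rayleigh_le _ v hv) (abs_nonneg _)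
  linarith

lemma lamMax_cont {a b n : ℕ} (hn : 0 < n) (A : Matrix (Fin a) (Fin n) ℝ)
    (B : Matrix (Fin b) (Fin n) ℝ) : Continuous (fun t => lamMax (Cmat A B t)) := by
  set K := ∑ i, ∑ j, |((Aᵀ * A) - (Bᵀ * B)) i j| with hK
  have hK0 : 0 ≤ K := Finset.sum_nonneg fun i _ => Finset.sum_nonneg fun j _ => abs_nonneg _
  apply LipschitzWith.continuous (K := Real.toNNReal K)
  apply LipschitzWith.of_dist_le_mul
  intro x y
  rw [Real.dist_eq, Real.dist_eq]
  have h1 := lamMax_lipschitz hn A B y x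
  have h2 := lamMax_lipschitz hn A B x y
  rw [abs_le]
  constructor
  · have : |y - x| = |x - y| := abs_sub_comm y x
    simp only [Real.coe_toNNReal _ hK0]
    nlinarith [abs_sub_comm y x]
  · simp only [Real.coe_toNNReal _ hK0]
    nlinarith

lemma coord_sq_le_one {n : ℕ} (v : Fin n → ℝ) (hv : v ⬝ᵥ v = 1) (i : Fin n) : |v i| ≤ 1 := by
  rw [abs_le_one_iff_mul_self_le_one]
  calc v i * v i ≤ ∑ j, v j * v j :=
        Finset.single_le_sum (f := fun j => v j * v j) (fun j _ => mul_self_nonneg _)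
          (Finset.mem_univ i)
    _ = 1 := hv

lemma cont_dot {n : ℕ} (M : Matrix (Fin n) (Fin n) ℝ) :
    Continuous (fun x : Fin n → ℝ => x ⬝ᵥ (M *ᵥ x)) := by
  simp only [dotProduct, Matrix.mulVec, dotProduct]
  fun_prop

lemma sphere_compact {n : ℕ} : IsCompact {v : Fin n → ℝ | v ⬝ᵥ v = 1} := by
  rw [Metric.isCompact_iff_isClosed_bounded]
  constructor
  · have : Continuous (fun v : Fin n → ℝ => v ⬝ᵥ v) := by
      simp only [dotProduct]; fun_prop
    exact isClosed_eq this continuous_const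
  · rw [Metric.isBounded_iff_subset_closedBall 0]
    refine ⟨1, ?_⟩
    intro v hv
    rw [Metric.mem_closedBall, dist_zero_right]
    rw [pi_norm_le_iff_of_nonneg zero_le_one]
    intro i
    exact coord_sq_le_one v hv i

open Filter Topology in
lemma eig_limit {a b n : ℕ} (hn : 0 < n) (A : Matrix (Fin a) (Fin n) ℝ)
    (B : Matrix (Fin b) (Fin n) ℝ) (μ : ℝ) (w : Fin n → ℝ)
    (hwu : w ⬝ᵥ w = 1)
    (hsimpleμ : ∀ u : Fin n → ℝ, Cmat A B μ *ᵥ u = lamMax (Cmat A B μ) • u → ∃ c : ℝ, u = c • w)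
    (t : ℕ → ℝ) (htlim : Tendsto t atTop (𝓝 μ))
    (v : ℕ → Fin n → ℝ) (hvu : ∀ k, v k ⬝ᵥ v k = 1)
    (hve : ∀ k, Cmat A B (t k) *ᵥ v k = lamMax (Cmat A B (t k)) • v k)
    (R : Matrix (Fin n) (Fin n) ℝ) :
    ∃ ψ : ℕ → ℕ, StrictMono ψ ∧
      Tendsto (fun k => v (ψ k) ⬝ᵥ (R *ᵥ v (ψ k))) atTop (𝓝 (w ⬝ᵥ (R *ᵥ w))) := by
  obtain ⟨u, huS, ψ, hψ, hψlim⟩ := sphere_compact.tendsto_subseq (fun k => hvu k)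
  refine ⟨ψ, hψ, ?_⟩
  have htψ : Tendsto (t ∘ ψ) atTop (𝓝 μ) := htlim.comp hψ.tendsto_atTop
  -- the limit u is a unit eigenvector of C μ with eigenvalue lamMax (C μ)
  have hu1 : u ⬝ᵥ u = 1 := huS
  have hmulcont : ∀ M : Matrix (Fin n) (Fin n) ℝ, Continuous (fun x : Fin n → ℝ => M *ᵥ x) := by
    intro M
    have h := LinearMap.continuous_of_finiteDimensional (M.mulVecLin)
    exact h
  have hLHS : Tendsto (fun k => Cmat A B (t (ψ k)) *ᵥ v (ψ k)) atTop (𝓝 (Cmat A B μ *ᵥ u)) := by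
    have h1 : ∀ k, Cmat A B (t (ψ k)) *ᵥ v (ψ k)
        = t (ψ k) • ((Aᵀ * A) *ᵥ v (ψ k)) + (1 - t (ψ k)) • ((Bᵀ * B) *ᵥ v (ψ k)) := by
      intro k
      simp [Cmat, Matrix.add_mulVec, Matrix.smul_mulVec]
    have h2 : Cmat A B μ *ᵥ u = μ • ((Aᵀ * A) *ᵥ u) + (1 - μ) • ((Bᵀ * B) *ᵥ u) := by
      simp [Cmat, Matrix.add_mulVec, Matrix.smul_mulVec]
    simp only [h1, h2]
    exact (htψ.smul (((hmulcont _).tendsto u).comp hψlim)).add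
      ((tendsto_const_nhds.sub htψ).smul (((hmulcont _).tendsto u).comp hψlim))
  have hRHS : Tendsto (fun k => lamMax (Cmat A B (t (ψ k))) • v (ψ k)) atTop
      (𝓝 (lamMax (Cmat A B μ) • u)) := by
    exact (((lamMax_cont hn A B).tendsto μ).comp htψ).smul hψlim
  have heq : Cmat A B μ *ᵥ u = lamMax (Cmat A B μ) • u := by
    have : (fun k => Cmat A B (t (ψ k)) *ᵥ v (ψ k))
        = (fun k => lamMax (Cmat A B (t (ψ k))) • v (ψ k)) := funext fun k => hve (ψ k)
    rw [this] at hLHS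
    exact tendsto_nhds_unique hLHS hRHS
  obtain ⟨c, hc⟩ := hsimpleμ u heq
  have hc2 : c * c = 1 := by
    have : u ⬝ᵥ u = (c * c) * (w ⬝ᵥ w) := by
      rw [hc, smul_dotProduct, dotProduct_smul, smul_eq_mul, smul_eq_mul]; ring
    rw [hu1, hwu, mul_one] at this
    linarith
  have hval : u ⬝ᵥ (R *ᵥ u) = w ⬝ᵥ (R *ᵥ w) := by
    rw [hc, Matrix.mulVec_smul, smul_dotProduct, dotProduct_smul,
      smul_eq_mul, smul_eq_mul, ← mul_assoc, hc2, one_mul]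
  rw [← hval]
  exact ((cont_dot R).tendsto u).comp hψlim

open Filter Topology in
lemma branch_right {a b n : ℕ} (hn : 0 < n) (A : Matrix (Fin a) (Fin n) ℝ)
    (B : Matrix (Fin b) (Fin n) ℝ) (μ : ℝ) (hμIcc : μ ∈ Set.Icc (0:ℝ) 1) (hμ1 : μ < 1)
    (hμmax : ∀ t ∈ Set.Icc (0:ℝ) 1, gdual A B t ≤ gdual A B μ)
    (w : Fin n → ℝ) (hwu : w ⬝ᵥ w = 1)
    (hsimpleμ : ∀ u : Fin n → ℝ, Cmat A B μ *ᵥ u = lamMax (Cmat A B μ) • u → ∃ c : ℝ, u = c • w) :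
    lamMax (Aᵀ * A) - lamMax (Bᵀ * B) ≤ w ⬝ᵥ (((Aᵀ * A) - (Bᵀ * B)) *ᵥ w) := by
  set R := (Aᵀ * A) - (Bᵀ * B) with hR
  set t : ℕ → ℝ := fun k => μ + (1 - μ) * (1 / (k + 1)) with ht
  have htpos : ∀ k : ℕ, μ < t k := by
    intro k
    have h1 : (0:ℝ) < 1 / (k + 1) := by positivity
    have : 0 < (1 - μ) * (1 / (k + 1)) := mul_pos (by linarith) h1
    simp only [ht]; linarith
  have htle : ∀ k : ℕ, t k ≤ 1 := by
    intro k
    have h1 : (1:ℝ) / (k + 1) ≤ 1 := by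
      rw [div_le_one (by positivity)]
      have : (0:ℝ) ≤ k := Nat.cast_nonneg k
      linarith
    have h2 : (1 - μ) * (1 / (k + 1)) ≤ (1 - μ) * 1 :=
      mul_le_mul_of_nonneg_left h1 (by linarith)
    simp only [ht]; linarith
  have htIcc : ∀ k, t k ∈ Set.Icc (0:ℝ) 1 := fun k => ⟨le_trans hμIcc.1 (le_of_lt (htpos k)), htle k⟩
  have htlim : Tendsto t atTop (𝓝 μ) := by
    have h0 : Tendsto (fun k : ℕ => 1 / ((k:ℝ) + 1)) atTop (𝓝 0) :=
      tendsto_one_div_add_atTop_nhds_zero_nat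
    have := (tendsto_const_nhds (x := μ)).add ((tendsto_const_nhds (x := (1-μ))).mul h0)
    simpa [ht, one_div] using this
  have spec := fun r => lamMax_spec hn (Cmat A B r) (Cmat_herm A B r)
  choose v hvu hve using fun k => (spec (t k)).2
  have hDk : ∀ k, lamMax (Aᵀ * A) - lamMax (Bᵀ * B) ≤ v k ⬝ᵥ (R *ᵥ v k) := by
    intro k
    have hg := hμmax (t k) (htIcc k)
    simp only [gdual] at hg
    have hray : lamMax (Cmat A B (t k)) = v k ⬝ᵥ (Cmat A B (t k) *ᵥ v k) := by
      rw [hve k, dotProduct_smul, hvu k, smul_eq_mul, mul_one]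
    have hsplit : v k ⬝ᵥ (Cmat A B (t k) *ᵥ v k)
        = v k ⬝ᵥ (Cmat A B μ *ᵥ v k) + (t k - μ) * (v k ⬝ᵥ (R *ᵥ v k)) := by
      rw [Cmat_sub A B μ (t k), Matrix.add_mulVec, dotProduct_add,
        Matrix.smul_mulVec, dotProduct_smul, smul_eq_mul]
    have hub := (spec μ).1 (v k) (hvu k)
    have hkey : (t k - μ) * (lamMax (Aᵀ * A) - lamMax (Bᵀ * B)) ≤ (t k - μ) * (v k ⬝ᵥ (R *ᵥ v k)) := by
      nlinarith [hg, hray, hsplit, hub]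
    have hpos : 0 < t k - μ := by linarith [htpos k]
    exact le_of_mul_le_mul_left hkey hpos
  obtain ⟨ψ, hψ, hlim⟩ := eig_limit hn A B μ w hwu hsimpleμ t htlim v hvu hve R
  exact ge_of_tendsto' hlim (fun k => hDk (ψ k))

open Filter Topology in
lemma branch_left {a b n : ℕ} (hn : 0 < n) (A : Matrix (Fin a) (Fin n) ℝ)
    (B : Matrix (Fin b) (Fin n) ℝ) (μ : ℝ) (hμIcc : μ ∈ Set.Icc (0:ℝ) 1) (hμ0 : 0 < μ)
    (hμmax : ∀ t ∈ Set.Icc (0:ℝ) 1, gdual A B t ≤ gdual A B μ)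
    (w : Fin n → ℝ) (hwu : w ⬝ᵥ w = 1)
    (hsimpleμ : ∀ u : Fin n → ℝ, Cmat A B μ *ᵥ u = lamMax (Cmat A B μ) • u → ∃ c : ℝ, u = c • w) :
    w ⬝ᵥ (((Aᵀ * A) - (Bᵀ * B)) *ᵥ w) ≤ lamMax (Aᵀ * A) - lamMax (Bᵀ * B) := by
  set R := (Aᵀ * A) - (Bᵀ * B) with hR
  set t : ℕ → ℝ := fun k => μ - μ * (1 / (k + 1)) with ht
  have htlt : ∀ k : ℕ, t k < μ := by
    intro k
    have h1 : (0:ℝ) < 1 / (k + 1) := by positivity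
    have : 0 < μ * (1 / (k + 1)) := mul_pos hμ0 h1
    simp only [ht]; linarith
  have htge : ∀ k : ℕ, 0 ≤ t k := by
    intro k
    have h1 : (1:ℝ) / (k + 1) ≤ 1 := by
      rw [div_le_one (by positivity)]
      have : (0:ℝ) ≤ k := Nat.cast_nonneg k
      linarith
    have h2 : μ * (1 / (k + 1)) ≤ μ * 1 := mul_le_mul_of_nonneg_left h1 (le_of_lt hμ0)
    simp only [ht]; linarith
  have htIcc : ∀ k, t k ∈ Set.Icc (0:ℝ) 1 := fun k => ⟨htge k, le_trans (le_of_lt (htlt k)) hμIcc.2⟩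
  have htlim : Tendsto t atTop (𝓝 μ) := by
    have h0 : Tendsto (fun k : ℕ => 1 / ((k:ℝ) + 1)) atTop (𝓝 0) :=
      tendsto_one_div_add_atTop_nhds_zero_nat
    have := (tendsto_const_nhds (x := μ)).sub ((tendsto_const_nhds (x := μ)).mul h0)
    simpa [ht, one_div] using this
  have spec := fun r => lamMax_spec hn (Cmat A B r) (Cmat_herm A B r)
  choose v hvu hve using fun k => (spec (t k)).2
  have hDk : ∀ k, v k ⬝ᵥ (R *ᵥ v k) ≤ lamMax (Aᵀ * A) - lamMax (Bᵀ * B) := by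
    intro k
    have hg := hμmax (t k) (htIcc k)
    simp only [gdual] at hg
    have hray : lamMax (Cmat A B (t k)) = v k ⬝ᵥ (Cmat A B (t k) *ᵥ v k) := by
      rw [hve k, dotProduct_smul, hvu k, smul_eq_mul, mul_one]
    have hsplit : v k ⬝ᵥ (Cmat A B (t k) *ᵥ v k)
        = v k ⬝ᵥ (Cmat A B μ *ᵥ v k) + (t k - μ) * (v k ⬝ᵥ (R *ᵥ v k)) := by
      rw [Cmat_sub A B μ (t k), Matrix.add_mulVec, dotProduct_add,
        Matrix.smul_mulVec, dotProduct_smul, smul_eq_mul]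
    have hub := (spec μ).1 (v k) (hvu k)
    have hkey : (μ - t k) * (v k ⬝ᵥ (R *ᵥ v k)) ≤ (μ - t k) * (lamMax (Aᵀ * A) - lamMax (Bᵀ * B)) := by
      nlinarith [hg, hray, hsplit, hub]
    have hpos : 0 < μ - t k := by linarith [htlt k]
    exact le_of_mul_le_mul_left hkey hpos
  obtain ⟨ψ, hψ, hlim⟩ := eig_limit hn A B μ w hwu hsimpleμ t htlim v hvu hve R
  exact le_of_tendsto' hlim (fun k => hDk (ψ k))

theorem stmt6 {a b n : ℕ} (A : Matrix (Fin a) (Fin n) ℝ) (B : Matrix (Fin b) (Fin n) ℝ)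
    (hsimple : ∀ μ ∈ Set.Icc (0 : ℝ) 1, ∃ w : Fin n → ℝ, w ≠ 0 ∧
      Cmat A B μ *ᵥ w = lamMax (Cmat A B μ) • w ∧
      ∀ u : Fin n → ℝ, Cmat A B μ *ᵥ u = lamMax (Cmat A B μ) • u → ∃ c : ℝ, u = c • w) :
    ∃ v : Fin n → ℝ, ∃ μ : ℝ, v ⬝ᵥ v = 1 ∧ μ ∈ Set.Icc (0 : ℝ) 1 ∧
      (∀ u : Fin n → ℝ, u ⬝ᵥ u = 1 →
        max (fairLoss A v) (fairLoss B v) ≤ max (fairLoss A u) (fairLoss B u)) ∧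
      (∀ t ∈ Set.Icc (0 : ℝ) 1, gdual A B t ≤ gdual A B μ) ∧
      max (fairLoss A v) (fairLoss B v) = gdual A B μ := by
  rcases Nat.eq_zero_or_pos n with hn0 | hn
  · exfalso
    obtain ⟨w, hwne, -, -⟩ := hsimple 0 (by norm_num)
    exact hwne (funext fun i => absurd i.isLt (by omega))
  set s1 := lamMax (Aᵀ * A) with hs1
  set s2 := lamMax (Bᵀ * B) with hs2
  have spec := fun r => lamMax_spec hn (Cmat A B r) (Cmat_herm A B r)
  -- maximizer of the dual
  have hgc : Continuous (fun t => gdual A B t) := by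
    have hφ := lamMax_cont hn A B
    simp only [gdual]
    exact ((continuous_id.mul continuous_const).add
      ((continuous_const.sub continuous_id).mul continuous_const)).sub hφ
  obtain ⟨μ, hμIcc, hμmaxOn⟩ := isCompact_Icc.exists_isMaxOn (Set.nonempty_Icc.mpr zero_le_one)
    hgc.continuousOn
  have hμmax : ∀ t ∈ Set.Icc (0:ℝ) 1, gdual A B t ≤ gdual A B μ := fun t ht => hμmaxOn ht
  -- eigenvector at μ
  obtain ⟨w, hwu, hweig⟩ := (spec μ).2
  obtain ⟨w0, hw0ne, hw0eig, hw0all⟩ := hsimple μ hμIcc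
  have hwne : w ≠ 0 := by
    intro h
    rw [h] at hwu
    simp at hwu
  obtain ⟨c0, hc0⟩ := hw0all w hweig
  have hc0ne : c0 ≠ 0 := by
    intro h
    rw [h, zero_smul] at hc0
    exact hwne hc0
  have huniq : ∀ u : Fin n → ℝ, Cmat A B μ *ᵥ u = lamMax (Cmat A B μ) • u → ∃ c : ℝ, u = c • w := by
    intro u hu
    obtain ⟨c, hc⟩ := hw0all u hu
    refine ⟨c / c0, ?_⟩
    rw [hc, hc0, smul_smul]
    congr 1
    field_simp
  set Dp := w ⬝ᵥ ((Aᵀ * A) *ᵥ w) with hDp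
  set Dq := w ⬝ᵥ ((Bᵀ * B) *ᵥ w) with hDq
  have hD : w ⬝ᵥ (((Aᵀ * A) - (Bᵀ * B)) *ᵥ w) = Dp - Dq := by
    rw [Matrix.sub_mulVec, dotProduct_sub]
  -- value of lamMax (Cmat A B μ)
  have hφμ : lamMax (Cmat A B μ) = μ * Dp + (1 - μ) * Dq := by
    have h1 : w ⬝ᵥ (Cmat A B μ *ᵥ w) = lamMax (Cmat A B μ) := by
      rw [hweig, dotProduct_smul, hwu, smul_eq_mul, mul_one]
    have h2 : w ⬝ᵥ (Cmat A B μ *ᵥ w) = μ * Dp + (1 - μ) * Dq := by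
      simp only [Cmat, Matrix.add_mulVec, dotProduct_add, Matrix.smul_mulVec,
        dotProduct_smul, smul_eq_mul]
      rfl
    rw [← h1, h2]
  -- fairLoss values at w
  have hfA : fairLoss A w = s1 - Dp := by rw [fairLoss]
  have hfB : fairLoss B w = s2 - Dq := by rw [fairLoss]
  have hgμ : gdual A B μ = μ * (s1 - Dp) + (1 - μ) * (s2 - Dq) := by
    simp only [gdual, hφμ, ← hs1, ← hs2]
    ring
  -- the max equals the convex combination
  have hmaxeq : max (s1 - Dp) (s2 - Dq) = μ * (s1 - Dp) + (1 - μ) * (s2 - Dq) := by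
    rcases eq_or_lt_of_le hμIcc.1 with hμ0 | hμ0
    · -- μ = 0 : need s1 - Dp ≤ s2 - Dq
      have hbr := branch_right hn A B μ hμIcc (by rw [← hμ0]; norm_num) hμmax w hwu huniq
      rw [hD] at hbr
      rw [← hμ0]
      rw [max_eq_right (by rw [← hs1, ← hs2] at hbr; linarith)]
      ring
    rcases eq_or_lt_of_le hμIcc.2 with hμ1 | hμ1
    · -- μ = 1 : need s2 - Dq ≤ s1 - Dp
      have hbl := branch_left hn A B μ hμIcc hμ0 hμmax w hwu huniq
      rw [hD] at hbl
      rw [hμ1] at *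
      rw [max_eq_left (by rw [← hs1, ← hs2] at hbl; linarith)]
      ring
    · -- interior : equality
      have hbr := branch_right hn A B μ hμIcc hμ1 hμmax w hwu huniq
      have hbl := branch_left hn A B μ hμIcc hμ0 hμmax w hwu huniq
      rw [hD] at hbr hbl
      rw [← hs1, ← hs2] at hbr hbl
      have heq : s1 - Dp = s2 - Dq := by linarith
      rw [heq, max_self]
      ring
  refine ⟨w, μ, hwu, hμIcc, ?_, hμmax, ?_⟩
  · -- primal optimality
    intro u hu
    rw [hfA, hfB, hmaxeq, ← hgμ]
    have hub := (spec μ).1 u hu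
    have hexp : u ⬝ᵥ (Cmat A B μ *ᵥ u) =
        μ * (u ⬝ᵥ ((Aᵀ * A) *ᵥ u)) + (1 - μ) * (u ⬝ᵥ ((Bᵀ * B) *ᵥ u)) := by
      simp only [Cmat, Matrix.add_mulVec, dotProduct_add, Matrix.smul_mulVec,
        dotProduct_smul, smul_eq_mul]
    have hfAu : fairLoss A u = s1 - u ⬝ᵥ ((Aᵀ * A) *ᵥ u) := by rw [fairLoss]
    have hfBu : fairLoss B u = s2 - u ⬝ᵥ ((Bᵀ * B) *ᵥ u) := by rw [fairLoss]
    have h1 : fairLoss A u ≤ max (fairLoss A u) (fairLoss B u) := le_max_left _ _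
    have h2 : fairLoss B u ≤ max (fairLoss A u) (fairLoss B u) := le_max_right _ _
    have h3 : μ * fairLoss A u ≤ μ * max (fairLoss A u) (fairLoss B u) :=
      mul_le_mul_of_nonneg_left h1 hμIcc.1
    have h4 : (1 - μ) * fairLoss B u ≤ (1 - μ) * max (fairLoss A u) (fairLoss B u) :=
      mul_le_mul_of_nonneg_left h2 (by linarith [hμIcc.2])
    have hgle : gdual A B μ ≤ μ * fairLoss A u + (1 - μ) * fairLoss B u := by
      simp only [gdual, ← hs1, ← hs2, hfAu, hfBu]
      nlinarith [hub, hexp]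
    calc gdual A B μ ≤ μ * fairLoss A u + (1 - μ) * fairLoss B u := hgle
      _ ≤ max (fairLoss A u) (fairLoss B u) := by linarith
  · rw [hfA, hfB, hmaxeq, hgμ]
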